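/- For all real numbers p and m with 0 < p < 1/e and m ≥ 3, the inequality 1 − (1 − p)^m ≤ (m / log₂ m) · p · log₂(1/p) holds. -/

import Mathlib

/-- For `0 < p < 1/e` and `m ≥ 3`: `1 - (1-p)^m ≤ (m / log₂ m) · p · log₂(1/p)`. -/
theorem coupon_pointwise_ineq (p m : ℝ) (hp0 : 0 < p) (hpe : p < 1 / Real.exp 1)
    (hm : 3 ≤ m) :
    1 - (1 - p) ^ m ≤ (m / Real.logb 2 m) * p * Real.logb 2 (1 / p) := by
  have hm0 : (0:ℝ) < m := by linarith
  have hp1 : p < 1 := lt_trans hpe (by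
    rw [div_lt_one (Real.exp_pos 1)]
    have := Real.add_one_le_exp (1:ℝ); linarith)
  have hlogm : 0 < Real.logb 2 m := Real.logb_pos one_lt_two (by linarith)
  have hinvp : (1:ℝ) < 1 / p := (one_lt_div hp0).mpr hp1
  have hlogp : 0 < Real.logb 2 (1 / p) := Real.logb_pos one_lt_two hinvp
  have hlog2 : (0:ℝ) < Real.log 2 := Real.log_pos one_lt_two
  rcases le_or_gt (m * p) 1 with hmp | hmp
  · -- case m*p ≤ 1 : use Bernoulli
    have hbern : 1 - m * p ≤ (1 - p) ^ m := by
      have := one_add_mul_self_le_rpow_one_add (s := -p) (by linarith) (p := m) (by linarith)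
      simpa [mul_neg, sub_eq_add_neg] using this
    have h1 : 1 - (1 - p) ^ m ≤ m * p := by linarith
    have hfac : Real.logb 2 m ≤ Real.logb 2 (1 / p) := by
      apply Real.logb_le_logb_of_le one_lt_two hm0
      rw [le_div_iff₀ hp0]
      nlinarith
    calc 1 - (1 - p) ^ m ≤ m * p := h1
      _ = (m / Real.logb 2 m) * p * Real.logb 2 m := by
          field_simp
      _ ≤ (m / Real.logb 2 m) * p * Real.logb 2 (1 / p) := by
          apply mul_le_mul_of_nonneg_left hfac
          positivity
  · -- case m*p > 1 : LHS ≤ 1 ≤ RHS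
    have hpow : 0 ≤ (1 - p) ^ m := Real.rpow_nonneg (by linarith) m
    have h1 : 1 - (1 - p) ^ m ≤ 1 := by linarith
    refine h1.trans ?_
    have key : Real.log m ≤ m * p * Real.log (1 / p) := by
      set t := m * p with ht
      have ht1 : 1 < t := hmp
      have hteq : 1 / p = m / t := by field_simp [ht]; ring
      have hlt : Real.log t ≤ t - 1 := Real.log_le_sub_one_of_pos (by linarith)
      have hme : Real.log t + 1 ≤ Real.log m := by
        have hlt2 : t < m / Real.exp 1 := by
          rw [ht, div_eq_mul_inv, ← one_div]
          exact mul_lt_mul_of_pos_left hpe hm0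
        have h2 : Real.log t ≤ Real.log (m / Real.exp 1) :=
          Real.log_le_log (by linarith) hlt2.le
        rw [Real.log_div (by positivity) (Real.exp_ne_zero 1), Real.log_exp] at h2
        linarith
      have hlogt : 0 ≤ Real.log t := Real.log_nonneg ht1.le
      rw [hteq, Real.log_div (by linarith) (by linarith)]
      nlinarith
    have hkey2 : Real.logb 2 m ≤ m * p * Real.logb 2 (1 / p) := by
      rw [Real.logb, Real.logb, ← mul_div_assoc, div_le_div_iff₀ hlog2 hlog2]
      nlinarith
    rw [div_mul_eq_mul_div, div_mul_eq_mul_div, le_div_iff₀ hlogm, one_mul]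
    exact hkey2
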